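/- Let f : ℝ^d → ℝ be μ-strongly convex, let g = (g_1, …, g_q) : ℝ^d → ℝ^q be componentwise convex, let A ∈ ℝ^{p×d}, b, v, p̂ ∈ ℝ^p, z ∈ ℝ^q, q̂ ∈ ℝ^q, ρ > 0. Suppose x⁺ minimizes over ℝ^d the augmented Lagrangian x ↦ f(x) + ⟨p̂, A x − b − v⟩ + (ρ/2)‖A x − b − v‖² + (1/(2ρ))‖[q̂ + ρ(g(x) − z)]_+‖² − (1/(2ρ))‖q̂‖², and set u⁺ = p̂ + ρ(A x⁺ − b − v) and y⁺ = [q̂ + ρ(g(x⁺) − z)]_+. Then x⁺ minimizes the ordinary Lagrangian x ↦ f(x) + ⟨u⁺, A x − b⟩ + ⟨y⁺, g(x)⟩ over ℝ^d. -/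

import Mathlib

open RealInnerProductSpace Finset

/-- Componentwise projection onto the nonnegative orthant of `ℝ^q`. -/
noncomputable def posPart {q : ℕ} (w : EuclideanSpace ℝ (Fin q)) : EuclideanSpace ℝ (Fin q) :=
  WithLp.toLp 2 (fun l => max (w l) 0)

lemma posPart_apply {n : ℕ} (u : EuclideanSpace ℝ (Fin n)) (l : Fin n) :
    posPart u l = max (u l) 0 := rfl

lemma sandwich_sq {u x y : ℝ} (h1 : x ≤ u) (h2 : u ≤ y) : u^2 ≤ x^2 + y^2 := by
  rcases le_or_gt 0 u with h | h
  · nlinarith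
  · nlinarith

lemma max_sq_le (a t : ℝ) : max t 0 ^ 2 ≤ (max a 0 + (t - a))^2 := by
  rcases le_or_gt t 0 with h | h
  · rw [max_eq_right h]; nlinarith [sq_nonneg (max a 0 + (t - a))]
  · rw [max_eq_left h.le]
    nlinarith [le_max_left a 0, le_max_right a 0]

lemma qscalar {ρ : ℝ} (hρ : 0 < ρ) (c zz gx gy : ℝ) :
    1/(2*ρ) * max (c + ρ*(gy - zz)) 0 ^ 2
      ≤ 1/(2*ρ) * max (c + ρ*(gx - zz)) 0 ^ 2
        + max (c + ρ*(gx - zz)) 0 * (gy - gx) + ρ/2 * (gy - gx)^2 := by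
  have key := max_sq_le (c + ρ*(gx - zz)) (c + ρ*(gy - zz))
  have h2 := mul_le_mul_of_nonneg_left key (le_of_lt (by positivity : (0:ℝ) < 1/(2*ρ)))
  calc 1/(2*ρ) * max (c + ρ*(gy - zz)) 0 ^ 2 ≤ _ := h2
    _ = _ := by field_simp; ring

lemma esq {n : ℕ} (x : EuclideanSpace ℝ (Fin n)) : ‖x‖^2 = ∑ i, x i ^ 2 := by
  rw [← real_inner_self_eq_norm_sq]
  simp only [PiLp.inner_apply, RCLike.inner_apply, conj_trivial, pow_two]

lemma einner {n : ℕ} (x y : EuclideanSpace ℝ (Fin n)) : ⟪x, y⟫ = ∑ i, x i * y i := by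
  simp [PiLp.inner_apply, RCLike.inner_apply]
  exact Finset.sum_congr rfl fun i _ => mul_comm _ _

lemma nsq_convex {E : Type*} [SeminormedAddCommGroup E] [NormedSpace ℝ E]
    (a b : E) (t : ℝ) (ht0 : 0 ≤ t) (ht1 : t ≤ 1) :
    ‖(1-t)•a + t•b‖^2 ≤ (1-t)*‖a‖^2 + t*‖b‖^2 := by
  have h1 : ‖(1-t)•a + t•b‖ ≤ (1-t)*‖a‖ + t*‖b‖ := by
    calc ‖(1-t)•a + t•b‖ ≤ ‖(1-t)•a‖ + ‖t•b‖ := norm_add_le _ _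
      _ = (1-t)*‖a‖ + t*‖b‖ := by
        rw [norm_smul, norm_smul, Real.norm_eq_abs, Real.norm_eq_abs,
          abs_of_nonneg (by linarith), abs_of_nonneg ht0]
  have h2 : (0:ℝ) ≤ (1-t)*‖a‖ + t*‖b‖ := by
    have := norm_nonneg a; have := norm_nonneg b
    nlinarith
  nlinarith [mul_nonneg (mul_nonneg ht0 (sub_nonneg.2 ht1)) (sq_nonneg (‖a‖ - ‖b‖)),
    norm_nonneg ((1-t)•a + t•b)]

lemma pId {P : Type*} [NormedAddCommGroup P] [InnerProductSpace ℝ P] (ρ : ℝ) (phat v s s' : P) :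
    ⟪phat, s⟫ + ρ/2*‖s‖^2
      = ⟪phat + ρ•s', s + v⟫ + ρ/2*‖s - s'‖^2 - (⟪phat, v⟫ + ρ*⟪s', v⟫ + ρ/2*‖s'‖^2) := by
  rw [@norm_sub_sq_real]
  simp [inner_add_left, inner_add_right, real_inner_smul_left, real_inner_comm s' s]
  ring

set_option maxHeartbeats 1000000 in
/-- If `x⁺` minimizes the augmented Lagrangian and
`u⁺ = p̂ + ρ(A x⁺ − b − v)`, `y⁺ = [q̂ + ρ(g(x⁺) − z)]₊`, then `x⁺` minimizes the ordinary
Lagrangian `x ↦ f x + ⟪u⁺, A x − b⟫ + ⟪y⁺, g x⟫`. -/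
theorem augmented_lagrangian_step_minimizes_lagrangian
    (d p q : ℕ) (μ ρ : ℝ) (hμ : 0 < μ) (hρ : 0 < ρ)
    (f : EuclideanSpace ℝ (Fin d) → ℝ)
    (hf : ConvexOn ℝ Set.univ (fun x => f x - μ / 2 * ‖x‖ ^ 2))
    (g : EuclideanSpace ℝ (Fin d) → EuclideanSpace ℝ (Fin q))
    (hg : ∀ l, ConvexOn ℝ Set.univ (fun x => g x l))
    (A : EuclideanSpace ℝ (Fin d) →L[ℝ] EuclideanSpace ℝ (Fin p))
    (b v phat : EuclideanSpace ℝ (Fin p)) (z qhat : EuclideanSpace ℝ (Fin q))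
    (xplus : EuclideanSpace ℝ (Fin d))
    (hxplus : ∀ w : EuclideanSpace ℝ (Fin d),
      f xplus + ⟪phat, A xplus - b - v⟫ + ρ / 2 * ‖A xplus - b - v‖ ^ 2
          + 1 / (2 * ρ) * ‖posPart (qhat + ρ • (g xplus - z))‖ ^ 2
          - 1 / (2 * ρ) * ‖qhat‖ ^ 2
        ≤ f w + ⟪phat, A w - b - v⟫ + ρ / 2 * ‖A w - b - v‖ ^ 2
          + 1 / (2 * ρ) * ‖posPart (qhat + ρ • (g w - z))‖ ^ 2
          - 1 / (2 * ρ) * ‖qhat‖ ^ 2)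
    (uplus : EuclideanSpace ℝ (Fin p)) (yplus : EuclideanSpace ℝ (Fin q))
    (huplus : uplus = phat + ρ • (A xplus - b - v))
    (hyplus : yplus = posPart (qhat + ρ • (g xplus - z))) :
    ∀ w : EuclideanSpace ℝ (Fin d),
      f xplus + ⟪uplus, A xplus - b⟫ + ⟪yplus, g xplus⟫
        ≤ f w + ⟪uplus, A w - b⟫ + ⟪yplus, g w⟫ := by
  intro w
  -- coordinate descriptions
  have hyl : ∀ l, yplus l = max (qhat l + ρ*(g xplus l - z l)) 0 := by
    intro l
    rw [hyplus, posPart_apply]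
    simp [PiLp.add_apply, PiLp.smul_apply, PiLp.sub_apply, smul_eq_mul]
  have npos2 : ∀ u : EuclideanSpace ℝ (Fin d),
      ‖posPart (qhat + ρ • (g u - z))‖^2 = ∑ l, max (qhat l + ρ*(g u l - z l)) 0 ^ 2 := by
    intro u
    rw [esq]
    refine Finset.sum_congr rfl fun l _ => ?_
    rw [posPart_apply]
    simp [PiLp.add_apply, PiLp.smul_apply, PiLp.sub_apply, smul_eq_mul]
  set m := xplus - (w - xplus) with hm
  set C := ρ/2*‖A (w - xplus)‖^2
      + ρ/2 * ∑ l, ((g w l - g xplus l)^2 + (g xplus l - g m l)^2) with hCdef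
  have key : ∀ t : ℝ, 0 < t → t ≤ 1 →
      f xplus + ⟪uplus, A xplus - b⟫ + ⟪yplus, g xplus⟫
        ≤ f w + ⟪uplus, A w - b⟫ + ⟪yplus, g w⟫ + t * C := by
    intro t ht0 ht1
    set y := xplus + t • (w - xplus) with hydef
    have hy : y = (1-t)•xplus + t•w := by rw [hydef]; module
    have h1t : (0:ℝ) < 1 + t := by linarith
    -- the generic p-part identity
    set Cp := ⟪phat, v⟫ + ρ*⟪A xplus - b - v, v⟫ + ρ/2*‖A xplus - b - v‖^2 with hCp
    have pIdG : ∀ u : EuclideanSpace ℝ (Fin d),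
        ⟪phat, A u - b - v⟫ + ρ/2*‖A u - b - v‖^2
          = ⟪uplus, A u - b⟫ + ρ/2*‖A (u - xplus)‖^2 - Cp := by
      intro u
      have e1 : (A u - b - v) + v = A u - b := by abel
      have e2 : (A u - b - v) - (A xplus - b - v) = A (u - xplus) := by
        rw [map_sub]; abel
      have h := pId ρ phat v (A u - b - v) (A xplus - b - v)
      rw [e1, e2, ← huplus] at h
      exact h
    have pId_y := pIdG y
    have pId_x := pIdG xplus
    rw [sub_self, map_zero, norm_zero] at pId_x
    -- the q-part inequality at y
    have gcl : ∀ l, g y l ≤ (1-t)*g xplus l + t*g w l := by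
      intro l
      have h := (hg l).2 (Set.mem_univ xplus) (Set.mem_univ w)
        (by linarith : (0:ℝ) ≤ 1 - t) ht0.le (by ring)
      rw [hy]
      simpa [smul_eq_mul] using h
    have hcomb : (t/(1+t))•m + (1/(1+t))•y = xplus := by
      rw [hm, hydef]
      have e1 : t/(1+t) + 1/(1+t) = 1 := by field_simp; ring
      calc (t/(1+t))•(xplus - (w - xplus)) + (1/(1+t))•(xplus + t•(w-xplus))
          = (t/(1+t) + 1/(1+t))•xplus + ((1/(1+t))*t - t/(1+t))•(w-xplus) := by module
        _ = xplus := by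
            rw [e1, show (1/(1+t))*t - t/(1+t) = 0 by ring, one_smul, zero_smul, add_zero]
    have glo : ∀ l, t*(g xplus l - g m l) ≤ g y l - g xplus l := by
      intro l
      have h := (hg l).2 (Set.mem_univ m) (Set.mem_univ y)
        (by positivity : (0:ℝ) ≤ t/(1+t)) (by positivity : (0:ℝ) ≤ 1/(1+t))
        (by field_simp; ring)
      rw [hcomb] at h
      simp only [smul_eq_mul] at h
      have h2 := mul_le_mul_of_nonneg_left h h1t.le
      rw [mul_add, ← mul_assoc, ← mul_assoc,
        show (1+t)*(t/(1+t)) = t by field_simp,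
        show (1+t)*(1/(1+t)) = 1 by field_simp, one_mul] at h2
      linarith
    have ΔBound : ∑ l, (g y l - g xplus l)^2
        ≤ t^2 * ∑ l, ((g w l - g xplus l)^2 + (g xplus l - g m l)^2) := by
      rw [Finset.mul_sum]
      refine Finset.sum_le_sum fun l _ => ?_
      have up : g y l - g xplus l ≤ t*(g w l - g xplus l) := by
        have := gcl l; linarith
      calc (g y l - g xplus l)^2
          ≤ (t*(g xplus l - g m l))^2 + (t*(g w l - g xplus l))^2 :=
            sandwich_sq (glo l) up
        _ = t^2 * ((g w l - g xplus l)^2 + (g xplus l - g m l)^2) := by ring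
    have qIneq : 1/(2*ρ) * ‖posPart (qhat + ρ • (g y - z))‖^2
        ≤ 1/(2*ρ) * ‖posPart (qhat + ρ • (g xplus - z))‖^2
          + (⟪yplus, g y⟫ - ⟪yplus, g xplus⟫)
          + ρ/2 * ∑ l, (g y l - g xplus l)^2 := by
      rw [npos2, npos2, einner, einner, Finset.mul_sum, Finset.mul_sum, Finset.mul_sum,
        ← Finset.sum_sub_distrib, ← Finset.sum_add_distrib, ← Finset.sum_add_distrib]
      refine Finset.sum_le_sum fun l _ => ?_
      have h := qscalar hρ (qhat l) (z l) (g xplus l) (g y l)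
      rw [hyl l]
      nlinarith [h]
    -- assemble: step inequality
    have H := hxplus y
    have R1 : f xplus + ⟪uplus, A xplus - b⟫ + ⟪yplus, g xplus⟫
        ≤ f y + ⟪uplus, A y - b⟫ + ⟪yplus, g y⟫
          + ρ/2*‖A (y - xplus)‖^2 + ρ/2 * ∑ l, (g y l - g xplus l)^2 := by
      linarith [H, pId_y, pId_x, qIneq]
    -- convexity of the Lagrangian pieces
    have fConv : f y ≤ (1-t)*f xplus + t*f w := by
      have hphi := hf.2 (Set.mem_univ xplus) (Set.mem_univ w)
        (by linarith : (0:ℝ) ≤ 1 - t) ht0.le (by ring)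
      simp only [smul_eq_mul] at hphi
      have hn := nsq_convex xplus w t ht0.le ht1
      have hn2 := mul_le_mul_of_nonneg_left hn (by positivity : (0:ℝ) ≤ μ/2)
      rw [hy]
      nlinarith [hphi, hn2]
    have linEq : ⟪uplus, A y - b⟫ = (1-t)*⟪uplus, A xplus - b⟫ + t*⟪uplus, A w - b⟫ := by
      have hAy : A y - b = (1-t)•(A xplus - b) + t•(A w - b) := by
        rw [hy, map_add, map_smul, map_smul]; module
      rw [hAy, inner_add_right, real_inner_smul_right, real_inner_smul_right]
    have gConv : ⟪yplus, g y⟫ ≤ (1-t)*⟪yplus, g xplus⟫ + t*⟪yplus, g w⟫ := by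
      have hylnn : ∀ l, 0 ≤ yplus l := fun l => by rw [hyl l]; exact le_max_right _ _
      rw [einner, einner, einner]
      calc ∑ l, yplus l * g y l
          ≤ ∑ l, yplus l * ((1-t)*g xplus l + t*g w l) :=
            Finset.sum_le_sum fun l _ => mul_le_mul_of_nonneg_left (gcl l) (hylnn l)
        _ = (1-t)*∑ l, yplus l * g xplus l + t*∑ l, yplus l * g w l := by
            rw [Finset.mul_sum, Finset.mul_sum, ← Finset.sum_add_distrib]
            exact Finset.sum_congr rfl fun l _ => by ring
    have nEq : ‖A (y - xplus)‖^2 = t^2 * ‖A (w - xplus)‖^2 := by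
      have : y - xplus = t•(w - xplus) := by rw [hydef]; abel
      rw [this, map_smul, norm_smul, Real.norm_eq_abs, abs_of_pos ht0, mul_pow]
    have b1 : ρ/2*‖A (y - xplus)‖^2 = t^2*(ρ/2*‖A (w - xplus)‖^2) := by rw [nEq]; ring
    have b2 : ρ/2 * ∑ l, (g y l - g xplus l)^2
        ≤ t^2*(ρ/2 * ∑ l, ((g w l - g xplus l)^2 + (g xplus l - g m l)^2)) := by
      have := mul_le_mul_of_nonneg_left ΔBound (by positivity : (0:ℝ) ≤ ρ/2)
      nlinarith [this]
    have hmul : t * (f xplus + ⟪uplus, A xplus - b⟫ + ⟪yplus, g xplus⟫)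
        ≤ t * (f w + ⟪uplus, A w - b⟫ + ⟪yplus, g w⟫ + t * C) := by
      rw [hCdef]
      nlinarith [R1, fConv, linEq, gConv, b1, b2]
    exact le_of_mul_le_mul_left hmul ht0
  -- pass to the limit t → 0⁺
  by_contra hcon
  push_neg at hcon
  rcases le_or_gt C 0 with hC0 | hC0
  · have := key 1 one_pos le_rfl
    linarith
  · set ε := (f xplus + ⟪uplus, A xplus - b⟫ + ⟪yplus, g xplus⟫)
      - (f w + ⟪uplus, A w - b⟫ + ⟪yplus, g w⟫) with hε
    have hεpos : 0 < ε := by rw [hε]; linarith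
    have hCne : C ≠ 0 := ne_of_gt hC0
    have ht0 : 0 < min 1 (ε/(2*C)) := lt_min one_pos (by positivity)
    have := key (min 1 (ε/(2*C))) ht0 (min_le_left _ _)
    have htC : min 1 (ε/(2*C)) * C ≤ ε/2 := by
      calc min 1 (ε/(2*C)) * C ≤ (ε/(2*C))*C :=
        mul_le_mul_of_nonneg_right (min_le_right _ _) hC0.le
        _ = ε/2 := by field_simp
    rw [hε] at hεpos
    linarith
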